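/- Let A > 0, let z, z̄ ∈ ℝ with z < z̄, and let σ : ℝ → (0, ∞) satisfy |σ(z̄) − σ(z)| > (z̄ − z)/A. Let ξ be a real-valued random variable with P(|ξ| ≤ A) = 1 and 0 < P(ξ ≤ a) < 1 for every a ∈ (−A, A). Set Y = z + σ(z)·ξ and Ȳ = z̄ + σ(z̄)·ξ. Then the laws of Y and Ȳ are not comparable in first order stochastic dominance: there exist a*, a_* ∈ ℝ such that P(Ȳ ≤ a*) < P(Y ≤ a*) and P(Y ≤ a_*) < P(Ȳ ≤ a_*). -/
import Mathlib


open MeasureTheory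

lemma stmt13_aux {Ω : Type*} [MeasurableSpace Ω] (P : Measure Ω) [IsProbabilityMeasure P]
    (A : ℝ) (hA : 0 < A) (ξ : Ω → ℝ) (hξ : Measurable ξ)
    (hsupp : P {ω | |ξ ω| ≤ A} = 1)
    (hcdf : ∀ a ∈ Set.Ioo (-A) A, 0 < P {ω | ξ ω ≤ a} ∧ P {ω | ξ ω ≤ a} < 1)
    (c s a : ℝ) (hs : 0 < s) :
    (a < c - s * A → P {ω | c + s * ξ ω ≤ a} = 0) ∧
    (c + s * A ≤ a → P {ω | c + s * ξ ω ≤ a} = 1) ∧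
    (c - s * A < a → a < c + s * A →
      0 < P {ω | c + s * ξ ω ≤ a} ∧ P {ω | c + s * ξ ω ≤ a} < 1) := by
  have hSmeas : MeasurableSet {ω | |ξ ω| ≤ A} :=
    measurableSet_le hξ.abs measurable_const
  refine ⟨?_, ?_, ?_⟩
  · intro ha
    have hsub : {ω | c + s * ξ ω ≤ a} ⊆ {ω | |ξ ω| ≤ A}ᶜ := by
      intro ω hω
      simp only [Set.mem_setOf_eq] at hω ⊢
      intro habs
      have h1 : ξ ω ≤ A := le_of_abs_le habs
      have h2 : -A ≤ ξ ω := neg_le_of_abs_le habs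
      nlinarith
    have hc : P {ω | |ξ ω| ≤ A}ᶜ = 0 := by
      rw [measure_compl hSmeas (measure_ne_top P _), hsupp, measure_univ, tsub_self]
    exact measure_mono_null hsub hc
  · intro ha
    have hsub : {ω | |ξ ω| ≤ A} ⊆ {ω | c + s * ξ ω ≤ a} := by
      intro ω hω
      simp only [Set.mem_setOf_eq] at hω ⊢
      have h1 : ξ ω ≤ A := le_of_abs_le hω
      nlinarith
    exact le_antisymm (prob_le_one) (hsupp ▸ measure_mono hsub)
  · intro h1 h2
    have hset : {ω | c + s * ξ ω ≤ a} = {ω | ξ ω ≤ (a - c) / s} := by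
      ext ω
      simp only [Set.mem_setOf_eq, le_div_iff₀ hs]
      constructor <;> intro h <;> nlinarith
    have hmem : (a - c) / s ∈ Set.Ioo (-A) A := by
      constructor
      · rw [lt_div_iff₀ hs]; nlinarith
      · rw [div_lt_iff₀ hs]; nlinarith
    rw [hset]
    exact hcdf _ hmem

/-- one step of the monotone Euler–Maruyama scheme is not stochastically
monotone when `σ` fails the Lipschitz bound: if `|σ(z̄) - σ(z)| > (z̄ - z)/A` with `z < z̄`,
`ξ` is supported on `[-A, A]` with CDF strictly between `0` and `1` on `(-A, A)`, then the
laws of `z + σ(z)·ξ` and `z̄ + σ(z̄)·ξ` are not comparable in first order stochastic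
dominance. -/
theorem stmt_13 {Ω : Type*} [MeasurableSpace Ω] (P : Measure Ω) [IsProbabilityMeasure P]
    (A : ℝ) (hA : 0 < A) (z zbar : ℝ) (hz : z < zbar)
    (σ : ℝ → ℝ) (hσpos : ∀ x : ℝ, 0 < σ x)
    (hnl : (zbar - z) / A < |σ zbar - σ z|)
    (ξ : Ω → ℝ) (hξ : Measurable ξ)
    (hsupp : P {ω | |ξ ω| ≤ A} = 1)
    (hcdf : ∀ a ∈ Set.Ioo (-A) A, 0 < P {ω | ξ ω ≤ a} ∧ P {ω | ξ ω ≤ a} < 1) :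
    ∃ astar alow : ℝ,
      P {ω | zbar + σ zbar * ξ ω ≤ astar} < P {ω | z + σ z * ξ ω ≤ astar} ∧
      P {ω | z + σ z * ξ ω ≤ alow} < P {ω | zbar + σ zbar * ξ ω ≤ alow} := by
  set s := σ z with hsdef
  set sb := σ zbar with hsbdef
  have hs : 0 < s := hσpos z
  have hsb : 0 < sb := hσpos zbar
  have auxY := fun a => stmt13_aux P A hA ξ hξ hsupp hcdf z s a hs
  have auxYb := fun a => stmt13_aux P A hA ξ hξ hsupp hcdf zbar sb a hsb
  rcases lt_abs.mp hnl with h | h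
  · -- sb - s > (zbar - z)/A, so zbar - sb*A < z - s*A and z + s*A < zbar + sb*A
    have hkey : zbar - z < (sb - s) * A := (div_lt_iff₀ hA).mp h
    -- astar
    set m := max (z + s * A) (zbar - sb * A) with hm
    set astar := (m + (zbar + sb * A)) / 2 with hast
    have hm3 : m < zbar + sb * A := by
      apply max_lt <;> nlinarith
    have hastar1 : z + s * A ≤ astar := by
      have := le_max_left (z + s * A) (zbar - sb * A); rw [hast]; linarith
    have hastar2 : zbar - sb * A < astar := by
      have := le_max_right (z + s * A) (zbar - sb * A); rw [hast]; linarith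
    have hastar3 : astar < zbar + sb * A := by rw [hast]; linarith
    -- alow
    set alow := ((zbar - sb * A) + (z - s * A)) / 2 with hal
    have halow1 : alow < z - s * A := by rw [hal]; linarith
    have halow2 : zbar - sb * A < alow := by rw [hal]; linarith
    have halow3 : alow < zbar + sb * A := by nlinarith
    refine ⟨astar, alow, ?_, ?_⟩
    · rw [(auxY astar).2.1 hastar1]
      exact ((auxYb astar).2.2 hastar2 hastar3).2
    · rw [(auxY alow).1 halow1]
      exact ((auxYb alow).2.2 halow2 halow3).1
  · -- s - sb > (zbar - z)/A, so zbar + sb*A < z + s*A and z - s*A < zbar - sb*A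
    have hkey : zbar - z < (s - sb) * A := by
      have := (div_lt_iff₀ hA).mp h; linarith
    set astar := ((z - s * A) + (zbar - sb * A)) / 2 with hast
    have hastar1 : astar < zbar - sb * A := by rw [hast]; linarith
    have hastar2 : z - s * A < astar := by rw [hast]; linarith
    have hastar3 : astar < z + s * A := by nlinarith
    set alow := ((zbar + sb * A) + (z + s * A)) / 2 with hal
    have halow1 : zbar + sb * A ≤ alow := by rw [hal]; linarith
    have halow2 : z - s * A < alow := by nlinarith
    have halow3 : alow < z + s * A := by rw [hal]; linarith
    refine ⟨astar, alow, ?_, ?_⟩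
    · rw [(auxYb astar).1 hastar1]
      exact ((auxY astar).2.2 hastar2 hastar3).1
    · rw [(auxYb alow).2.1 halow1]
      exact ((auxY alow).2.2 halow2 halow3).2
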